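/- arXiv:1911.00491 — 4 statements merged into one kernel-verified Lean document; each statement's English description precedes it below -/
import Mathlib

section
/- Let a > 0, b ≥ 0, λ > 0. If b/a − 1 < −λ/a², then the unique minimizer of F(m) = (1/2)(b − m·a)² + λ|m − 1| over m ∈ ℝ is m = (b·a + λ)/a². -/
/-- The scalar objective of the sparse frame multiplier estimation problem. -/
noncomputable def Fobj (a b lam m : ℝ) : ℝ := (1/2) * (b - m * a)^2 + lam * |m - 1|

theorem stmt2 (a b lam : ℝ) (ha : 0 < a) (hb : 0 ≤ b) (hl : 0 < lam)
    (hcase : b / a - 1 < -(lam / a^2)) :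
    ∀ x : ℝ, x ≠ (b * a + lam) / a^2 →
      Fobj a b lam ((b * a + lam) / a^2) < Fobj a b lam x := by
  intro x hx
  have ha2 : (0:ℝ) < a ^ 2 := by positivity
  set M := (b * a + lam) / a ^ 2 with hMdef
  have hMa : M * a ^ 2 = b * a + lam := div_mul_cancel₀ _ (ne_of_gt ha2)
  have hMlt : M < 1 := by
    rw [hMdef, div_lt_one ha2]
    have h1 : b / a * a ^ 2 = b * a := by field_simp
    have h2 : lam / a ^ 2 * a ^ 2 = lam := div_mul_cancel₀ _ ha2.ne'
    nlinarith [mul_lt_mul_of_pos_right hcase ha2]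
  have habsM : |M - 1| = 1 - M := by rw [abs_of_nonpos (by linarith)]; ring
  have habsx : 1 - x ≤ |x - 1| := by rw [abs_sub_comm]; exact le_abs_self _
  have hxM : (0:ℝ) < (x - M)^2 := by
    have : x - M ≠ 0 := sub_ne_zero.mpr hx
    positivity
  unfold Fobj
  rw [habsM]
  nlinarith [mul_le_mul_of_nonneg_left habsx hl.le, mul_pos ha2 hxM, hMa]
end

section
/- Let a > 0, λ > 0, and let m*(b) be the unique minimizer of F_b(m) = (1/2)(b − m·a)² + λ|m − 1|. Then for all b ≥ 0, |m*(b) − b/a| ≤ λ/a², i.e., the regularized mask differs from the unregularized ratio b/a by at most λ/a². -/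
set_option maxHeartbeats 1000000


theorem stmt10 (a b lam m : ℝ) (ha : 0 < a) (hl : 0 < lam) (hb : 0 ≤ b)
    (hm : ∀ x : ℝ, x ≠ m → Fobj a b lam m < Fobj a b lam x) :
    |m - b / a| ≤ lam / a^2 := by
  by_contra hcon
  push_neg at hcon
  have ha2 : (0:ℝ) < a^2 := by positivity
  rcases lt_abs.mp hcon with h1 | h1
  · -- m > b/a + lam/a^2
    set x := b / a + lam / a^2 with hxdef
    clear_value x
    have hlt : x < m := by rw [hxdef]; linarith
    have key := hm x (ne_of_lt hlt)
    unfold Fobj at key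
    have key2 := mul_lt_mul_of_pos_left key ha2
    have habs0 := abs_sub_abs_le_abs_sub (x - 1) (m - 1)
    rw [show x - 1 - (m - 1) = x - m from by ring,
        abs_of_neg (by linarith : x - m < 0)] at habs0
    have habs : |x - 1| - |m - 1| ≤ m - x := by linarith
    set D := a * m - b with hD
    clear_value D
    have hu : lam < a * D := by
      have := (div_lt_iff₀ ha2).mp h1
      have hb' : b = a * (b / a) := by field_simp
      nlinarith [this]
    have e2 : a^2 * (b - x*a)^2 = lam^2 := by
      rw [hxdef]; field_simp; ring
    have e4 : a^2 * (b - m*a)^2 = (a*D)^2 := by rw [hD]; ring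
    have emx : a^2 * (m - x) = a*D - lam := by
      rw [hxdef, hD]; field_simp; ring
    have habs2 : lam * (a^2 * (|x - 1| - |m - 1|)) ≤ lam * (a*D - lam) := by
      rw [← emx]
      exact mul_le_mul_of_nonneg_left (mul_le_mul_of_nonneg_left habs ha2.le) hl.le
    nlinarith [sq_nonneg (a*D - lam)]
  · -- m < b/a - lam/a^2
    set x := b / a - lam / a^2 with hxdef
    clear_value x
    have hlt : m < x := by rw [hxdef]; linarith
    have key := hm x (ne_of_gt hlt)
    unfold Fobj at key
    have key2 := mul_lt_mul_of_pos_left key ha2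
    have habs0 := abs_sub_abs_le_abs_sub (x - 1) (m - 1)
    rw [show x - 1 - (m - 1) = x - m from by ring,
        abs_of_pos (by linarith : 0 < x - m)] at habs0
    set D := b - a * m with hD
    clear_value D
    have hu : lam < a * D := by
      have := (div_lt_iff₀ ha2).mp (by linarith : lam / a^2 < b/a - m)
      have hb' : b = a * (b / a) := by field_simp
      nlinarith [this]
    have e2 : a^2 * (b - x*a)^2 = lam^2 := by
      rw [hxdef]; field_simp; ring
    have e4 : a^2 * (b - m*a)^2 = (a*D)^2 := by rw [hD]; ring
    have emx : a^2 * (x - m) = a*D - lam := by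
      rw [hxdef, hD]; field_simp; ring
    have habs2 : lam * (a^2 * (|x - 1| - |m - 1|)) ≤ lam * (a*D - lam) := by
      rw [← emx]
      exact mul_le_mul_of_nonneg_left (mul_le_mul_of_nonneg_left habs0 ha2.le) hl.le
    nlinarith [sq_nonneg (a*D - lam)]
end

section
/- Let n ∈ ℕ and let c₁, c₂ ∈ ℝⁿ with every coordinate of c₁ strictly positive and every coordinate of c₂ nonnegative, and λ > 0. Then the minimizer over m ∈ ℝⁿ of (1/2)‖c₂ − m ⊙ c₁‖² + λ‖m − 1‖₁ (where ⊙ is coordinatewise product, ‖·‖ the Euclidean norm, ‖·‖₁ the ℓ¹ norm, and 1 the all-ones vector) is given coordinatewise by mᵢ = (c₂ᵢ/c₁ᵢ − 1)·max(0, 1 − λ/(c₁ᵢ²·|c₂ᵢ/c₁ᵢ − 1|)) + 1 when c₂ᵢ ≠ c₁ᵢ, and mᵢ = 1 otherwise. -/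
lemma scalar_min (a d lam u v : ℝ) (ha : 0 < a) (hl : 0 < lam)
    (hv : v = if d = 0 then 0 else (d/a) * max 0 (1 - lam/(a * |d|)))
    (hu : u ≠ v) :
    (1/2)*(d - v*a)^2 + lam * |v| < (1/2)*(d - u*a)^2 + lam * |u| := by
  rcases le_or_gt (a * |d|) lam with hle | hgt
  · -- thresholded to zero
    have hv0 : v = 0 := by
      rcases eq_or_ne d 0 with hd | hd
      · simp [hv, hd]
      · have h1 : 1 - lam/(a * |d|) ≤ 0 := by
          have hpos : 0 < a * |d| := mul_pos ha (abs_pos.mpr hd)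
          rw [sub_nonpos, le_div_iff₀ hpos]; linarith
        simp [hv, hd, max_eq_left h1]
    subst hv0
    have hu0 : u ≠ 0 := hu
    have h2 : d * u ≤ |d| * |u| := (le_abs_self _).trans (abs_mul d u).le
    have h3 : |d| * |u| * a ≤ lam * |u| := by
      nlinarith [abs_nonneg u, abs_nonneg d]
    have h4 : d * u * a ≤ lam * |u| := (mul_le_mul_of_nonneg_right h2 ha.le).trans h3
    have h5 : 0 < a^2 * u^2 := by positivity
    simp only [abs_zero, mul_zero, zero_mul, sub_zero]
    nlinarith [h4, h5]
  · have hd : d ≠ 0 := by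
      intro h; rw [h] at hgt; simp at hgt; linarith
    have hmax : max 0 (1 - lam/(a * |d|)) = 1 - lam/(a * |d|) := by
      have : 0 < 1 - lam/(a * |d|) := by
        rw [sub_pos, div_lt_one (mul_pos ha (abs_pos.mpr hd))]; exact hgt
      exact max_eq_right this.le
    have hsq : 0 < (u-v)^2 * a^2 := by
      have : u - v ≠ 0 := sub_ne_zero.mpr hu
      positivity
    rcases hd.lt_or_gt with hdn | hdp
    · -- d < 0
      have habs : |d| = -d := abs_of_neg hdn
      have hv' : v = d/a + lam/a^2 := by
        rw [hv, if_neg hd, hmax, habs]; field_simp; ring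
      have key : a*(d - v*a) = -lam := by rw [hv']; field_simp; ring
      have hvneg : v ≤ 0 := by
        rw [hv']
        have h6 : lam < a * (-d) := by rwa [habs] at hgt
        rw [div_add_div _ _ (ne_of_gt ha) (by positivity : (a:ℝ)^2 ≠ 0)]
        apply div_nonpos_of_nonpos_of_nonneg
        · nlinarith
        · positivity
      have hav : |v| = -v := abs_of_nonpos hvneg
      have hau : lam * (-u) ≤ lam * |u| := mul_le_mul_of_nonneg_left (neg_le_abs u) hl.le
      have e2 : (d - u*a)^2 = (d - v*a)^2 + 2*lam*(u-v) + (u-v)^2*a^2 := by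
        linear_combination (-2*(u-v)) * key
      rw [hav]; linarith [e2, hsq, hau]
    · -- d > 0
      have habs : |d| = d := abs_of_pos hdp
      have hv' : v = d/a - lam/a^2 := by
        rw [hv, if_neg hd, hmax, habs]; field_simp
      have key : a*(d - v*a) = lam := by rw [hv']; field_simp; ring
      have hvpos : 0 ≤ v := by
        rw [hv']
        have h6 : lam < a * d := by rwa [habs] at hgt
        rw [div_sub_div _ _ (ne_of_gt ha) (by positivity : (a:ℝ)^2 ≠ 0)]
        apply div_nonneg
        · nlinarith
        · positivity
      have hav : |v| = v := abs_of_nonneg hvpos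
      have hau : lam * u ≤ lam * |u| := mul_le_mul_of_nonneg_left (le_abs_self u) hl.le
      have e2 : (d - u*a)^2 = (d - v*a)^2 - 2*lam*(u-v) + (u-v)^2*a^2 := by
        linear_combination (-2*(u-v)) * key
      rw [hav]; linarith [e2, hsq, hau]

lemma coord_min (a b lam t : ℝ) (ha : 0 < a) (hl : 0 < lam) (m : ℝ)
    (hm : m = if b = a then (1:ℝ) else (b/a - 1) * max 0 (1 - lam/(a^2 * |b/a - 1|)) + 1)
    (ht : t ≠ m) :
    (1/2)*(b - m*a)^2 + lam * |m - 1| < (1/2)*(b - t*a)^2 + lam * |t - 1| := by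
  have hv : m - 1 = if (b - a) = 0 then 0 else ((b-a)/a) * max 0 (1 - lam/(a * |b - a|)) := by
    rcases eq_or_ne b a with h | h
    · simp [hm, h]
    · have hd : b - a ≠ 0 := sub_ne_zero.mpr h
      have e1 : b/a - 1 = (b-a)/a := by field_simp
      have e2 : a^2 * |b/a - 1| = a * |b - a| := by
        rw [e1, abs_div, abs_of_pos ha]; field_simp
      rw [hm, if_neg h, if_neg hd, e2, e1]; ring
  have ht' : t - 1 ≠ m - 1 := fun h => ht (by linarith)
  have h := scalar_min a (b-a) lam (t-1) (m-1) ha hl hv ht'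
  have e3 : b - m*a = (b-a) - (m-1)*a := by ring
  have e4 : b - t*a = (b-a) - (t-1)*a := by ring
  rw [e3, e4]; exact h

open Finset in
theorem stmt12 (n : ℕ) (c₁ c₂ : Fin n → ℝ) (lam : ℝ)
    (hc₁ : ∀ i, 0 < c₁ i) (hc₂ : ∀ i, 0 ≤ c₂ i) (hl : 0 < lam) :
    ∀ x : Fin n → ℝ,
      x ≠ (fun i => if c₂ i = c₁ i then (1 : ℝ)
            else (c₂ i / c₁ i - 1) *
              max 0 (1 - lam / ((c₁ i)^2 * |c₂ i / c₁ i - 1|)) + 1) →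
      (1/2) * ∑ i, (c₂ i - (if c₂ i = c₁ i then (1 : ℝ)
            else (c₂ i / c₁ i - 1) *
              max 0 (1 - lam / ((c₁ i)^2 * |c₂ i / c₁ i - 1|)) + 1) * c₁ i)^2
        + lam * ∑ i, |(if c₂ i = c₁ i then (1 : ℝ)
            else (c₂ i / c₁ i - 1) *
              max 0 (1 - lam / ((c₁ i)^2 * |c₂ i / c₁ i - 1|)) + 1) - 1|
      < (1/2) * ∑ i, (c₂ i - x i * c₁ i)^2 + lam * ∑ i, |x i - 1| := by
  intro x hx
  obtain ⟨i0, hi0⟩ := Function.ne_iff.mp hx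
  rw [Finset.mul_sum, Finset.mul_sum, Finset.mul_sum, Finset.mul_sum,
    ← Finset.sum_add_distrib, ← Finset.sum_add_distrib]
  refine Finset.sum_lt_sum (fun i _ => ?_) ⟨i0, Finset.mem_univ i0, ?_⟩
  · rcases eq_or_ne (x i) (if c₂ i = c₁ i then (1 : ℝ)
        else (c₂ i / c₁ i - 1) *
          max 0 (1 - lam / ((c₁ i)^2 * |c₂ i / c₁ i - 1|)) + 1) with h | h
    · rw [h]
    · exact (coord_min (c₁ i) (c₂ i) lam (x i) (hc₁ i) hl _ rfl h).le
  · exact coord_min (c₁ i0) (c₂ i0) lam (x i0) (hc₁ i0) hl _ rfl hi0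
end

section
/- Let a > 0, b₁, b₂ ≥ 0 with b₁ ≤ b₂, λ > 0, and let m₁, m₂ be the unique minimizers of Fᵢ(m) = (1/2)(bᵢ − m·a)² + λ|m − 1| for i = 1, 2. Then m₂ − m₁ ≤ (b₂ − b₁)/a, i.e., the mask estimate is Lipschitz in b with constant 1/a. -/
/-- If `m` is the strict minimizer of `Fobj a b lam`, then `m` minimizes the
convex function `x ↦ lam*|x-1| + (a^2*m - a*b)*x` (first-order optimality). -/
lemma cross_ineq (a b lam m : ℝ) (hl : 0 < lam)
    (hm : ∀ x : ℝ, x ≠ m → Fobj a b lam m < Fobj a b lam x) (x : ℝ) :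
    lam * |m - 1| + (a^2*m - a*b) * m ≤ lam * |x - 1| + (a^2*m - a*b) * x := by
  by_contra h
  push_neg at h
  have hxm : x ≠ m := by
    rintro rfl; exact lt_irrefl _ h
  set δ : ℝ := (lam * |m - 1| + (a^2*m - a*b) * m) - (lam * |x - 1| + (a^2*m - a*b) * x)
    with hδdef
  have hδpos : 0 < δ := by simp only [hδdef]; linarith
  have hne0 : x - m ≠ 0 := sub_ne_zero.mpr hxm
  have hxm' : (x - m) ^ 2 > 0 := by positivity
  have hsq : 0 < a^2 * (x - m)^2 + 1 := by positivity
  set t : ℝ := min 1 (δ / (a^2 * (x-m)^2 + 1)) with htdef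
  have ht0 : 0 < t := lt_min one_pos (div_pos hδpos hsq)
  have ht1 : t ≤ 1 := min_le_left _ _
  have hq : t * (a^2 * (x-m)^2 + 1) ≤ δ := by
    have : t ≤ δ / (a^2 * (x-m)^2 + 1) := min_le_right _ _
    calc t * (a^2 * (x-m)^2 + 1) ≤ (δ / (a^2 * (x-m)^2 + 1)) * (a^2 * (x-m)^2 + 1) :=
          mul_le_mul_of_nonneg_right this hsq.le
      _ = δ := by field_simp
  have habs : |m + t*(x-m) - 1| ≤ (1-t)*|m-1| + t*|x-1| := by
    have he : m + t*(x-m) - 1 = (1-t)*(m-1) + t*(x-1) := by ring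
    rw [he]
    calc |(1-t)*(m-1) + t*(x-1)| ≤ |(1-t)*(m-1)| + |t*(x-1)| := abs_add_le _ _
      _ = (1-t)*|m-1| + t*|x-1| := by
          rw [abs_mul, abs_mul, abs_of_nonneg (by linarith : (0:ℝ) ≤ 1 - t),
            abs_of_nonneg ht0.le]
  have hne : m + t*(x-m) ≠ m := by
    intro hc
    have : t * (x - m) = 0 := by linarith
    rcases mul_eq_zero.mp this with h' | h'
    · exact ht0.ne' h'
    · exact hxm (by linarith)
  have hlt := hm (m + t*(x-m)) hne
  unfold Fobj at hlt
  have habs' : lam * |m + t*(x-m) - 1| ≤ lam * ((1-t)*|m-1| + t*|x-1|) :=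
    mul_le_mul_of_nonneg_left habs hl.le
  nlinarith [mul_le_mul_of_nonneg_left hq ht0.le, mul_pos ht0 hδpos,
    sq_nonneg (x - m), mul_pos ht0 ht0]

theorem stmt16 (a lam b₁ b₂ m₁ m₂ : ℝ) (ha : 0 < a) (hl : 0 < lam)
    (hb₁ : 0 ≤ b₁) (hb₂ : 0 ≤ b₂) (hb : b₁ ≤ b₂)
    (hm₁ : ∀ x : ℝ, x ≠ m₁ → Fobj a b₁ lam m₁ < Fobj a b₁ lam x)
    (hm₂ : ∀ x : ℝ, x ≠ m₂ → Fobj a b₂ lam m₂ < Fobj a b₂ lam x) :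
    m₂ - m₁ ≤ (b₂ - b₁) / a := by
  have h₁ := cross_ineq a b₁ lam m₁ hl hm₁ m₂
  have h₂ := cross_ineq a b₂ lam m₂ hl hm₂ m₁
  rw [le_div_iff₀ ha]
  rcases le_or_gt m₂ m₁ with h | h
  · nlinarith
  · nlinarith [mul_pos ha (sub_pos.mpr h), sq_nonneg a, mul_pos (mul_pos ha ha) (mul_pos (sub_pos.mpr h) (sub_pos.mpr h))]
end
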